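/- Let (L, ≤) be a complete lattice, X and V nonempty sets, l : X × V → L, and let X̄ ⊆ X and V̄ ⊆ V be nonempty subsets. Then the following are equivalent: (a) X̄ is a solution of the problem of minimizing p over X, V̄ is a solution of the problem of maximizing d over V, and strong duality holds, i.e. sup_{v ∈ V} d(v) = inf_{x ∈ X} p(x); (b) (X̄,V̄) is a saddle point of l. The same equivalence holds with 'solution' replaced by 'full solution' in (a) and 'saddle point' replaced by 'full saddle point' in (b). -/
import Mathlib


open Set

noncomputable section

variable {L X V : Type*}

/-- The set of minimal elements of `A`. -/
def MinSet [PartialOrder L] (A : Set L) : Set L := {a ∈ A | ∀ b ∈ A, b ≤ a → b = a}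

/-- The set of maximal elements of `A`. -/
def MaxSet [PartialOrder L] (A : Set L) : Set L := {a ∈ A | ∀ b ∈ A, a ≤ b → b = a}

/-- `p(x) = sup_{v ∈ V} l(x,v)`. -/
def pFun [CompleteLattice L] (l : X → V → L) (x : X) : L := ⨆ v : V, l x v

/-- `d(v) = inf_{x ∈ X} l(x,v)`. -/
def dFun [CompleteLattice L] (l : X → V → L) (v : V) : L := ⨅ x : X, l x v

/-- Condition (b) of the definition of a saddle point: for all `U ⊆ X`, `W ⊆ V`,
`Ľ(X̄,W) ≤ Ľ(X̄,V̄) = L̂(X̄,V̄) ≤ L̂(U,V̄)`, where `L̂(U,W) = sup_{v ∈ W} inf_{x ∈ U} l(x,v)`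
and `Ľ(U,W) = inf_{x ∈ U} sup_{v ∈ W} l(x,v)` (with `sup ∅ = ⊥` and `inf ∅ = ⊤`). -/
def SaddleIneq [CompleteLattice L] (l : X → V → L) (Xb : Set X) (Vb : Set V) : Prop :=
  ∀ (U : Set X) (W : Set V),
    (⨅ x ∈ Xb, ⨆ v ∈ W, l x v) ≤ (⨅ x ∈ Xb, ⨆ v ∈ Vb, l x v) ∧
    (⨅ x ∈ Xb, ⨆ v ∈ Vb, l x v) = (⨆ v ∈ Vb, ⨅ x ∈ Xb, l x v) ∧
    (⨆ v ∈ Vb, ⨅ x ∈ Xb, l x v) ≤ (⨆ v ∈ Vb, ⨅ x ∈ U, l x v)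

/-- `(X̄,V̄)` is a saddle point of `l`: (a) `∅ ≠ p[X̄] ⊆ Min p[X]` and
`∅ ≠ d[V̄] ⊆ Max d[V]`; (b) the saddle inequalities hold. -/
def IsSaddle [CompleteLattice L] (l : X → V → L) (Xb : Set X) (Vb : Set V) : Prop :=
  ((pFun l '' Xb).Nonempty ∧ pFun l '' Xb ⊆ MinSet (Set.range (pFun l)) ∧
   (dFun l '' Vb).Nonempty ∧ dFun l '' Vb ⊆ MaxSet (Set.range (dFun l))) ∧
  SaddleIneq l Xb Vb

/-- `(X̄,V̄)` is a full saddle point of `l`: as `IsSaddle`, with equalities in (a). -/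
def IsFullSaddle [CompleteLattice L] (l : X → V → L) (Xb : Set X) (Vb : Set V) : Prop :=
  ((pFun l '' Xb).Nonempty ∧ pFun l '' Xb = MinSet (Set.range (pFun l)) ∧
   (dFun l '' Vb).Nonempty ∧ dFun l '' Vb = MaxSet (Set.range (dFun l))) ∧
  SaddleIneq l Xb Vb


theorem aux_weak_duality [CompleteLattice L] (l : X → V → L) :
    (⨆ v : V, dFun l v) ≤ ⨅ x : X, pFun l x := by
  refine iSup_le fun v => le_iInf fun x => ?_
  exact (iInf_le (fun x => l x v) x).trans (le_iSup (l x) v)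

theorem aux_saddleIneq_iff [CompleteLattice L] (l : X → V → L) (Xb : Set X) (Vb : Set V) :
    SaddleIneq l Xb Vb ↔ (⨅ x ∈ Xb, pFun l x) = (⨆ v ∈ Vb, dFun l v) := by
  have hL : ∀ W : Set V, (⨅ x ∈ Xb, ⨆ v ∈ W, l x v) ≤ ⨅ x ∈ Xb, pFun l x :=
    fun W => iInf₂_mono fun x _ => iSup₂_le fun v _ => le_iSup (l x) v
  have hU : ∀ U : Set X, (⨆ v ∈ Vb, dFun l v) ≤ ⨆ v ∈ Vb, ⨅ x ∈ U, l x v :=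
    fun U => iSup₂_mono fun v _ => le_iInf₂ fun x _ => iInf_le (fun x => l x v) x
  have hmix : (⨆ v ∈ Vb, ⨅ x ∈ Xb, l x v) ≤ ⨅ x ∈ Xb, ⨆ v ∈ Vb, l x v :=
    iSup₂_le fun v hv => le_iInf₂ fun x hx => (iInf₂_le x hx).trans (le_iSup₂ (f := fun v _ => l x v) v hv)
  have hLr : (⨅ x ∈ Xb, pFun l x) ≤ ⨅ x ∈ Xb, ⨆ v, l x v := le_of_eq rfl
  constructor
  · intro h
    have h1 := (h Set.univ Set.univ).1
    have h2 := (h Set.univ Set.univ).2.1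
    have h3 := (h Set.univ Set.univ).2.2
    simp only [Set.mem_univ, iSup_true, iInf_true, iSup_univ, iInf_univ] at h1 h3
    have e1 : (⨅ x ∈ Xb, pFun l x) = ⨅ x ∈ Xb, ⨆ v ∈ Vb, l x v :=
      le_antisymm h1 (hL Vb)
    have e2 : (⨆ v ∈ Vb, ⨅ x ∈ Xb, l x v) = ⨆ v ∈ Vb, dFun l v :=
      le_antisymm h3 (hU Xb)
    rw [e1, h2, e2]
  · intro heq U W
    have hchain : (⨆ v ∈ Vb, dFun l v) ≤ ⨆ v ∈ Vb, ⨅ x ∈ Xb, l x v := hU Xb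
    have e1 : (⨅ x ∈ Xb, ⨆ v ∈ Vb, l x v) = ⨅ x ∈ Xb, pFun l x :=
      le_antisymm (hL Vb) (heq ▸ hchain.trans hmix)
    have e2 : (⨆ v ∈ Vb, ⨅ x ∈ Xb, l x v) = ⨆ v ∈ Vb, dFun l v :=
      le_antisymm (hmix.trans ((hL Vb).trans_eq heq)) hchain
    refine ⟨(hL W).trans_eq e1.symm, by rw [e1, heq, e2], e2.trans_le (hU U)⟩

/-- **Solutions plus strong duality ⟺ saddle point.** For nonempty `X̄ ⊆ X`, `V̄ ⊆ V`:
(a) `X̄` is a solution of minimizing `p` (an infimizer consisting of minimizers), `V̄` is a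
solution of maximizing `d` (a supremizer consisting of maximizers), and strong duality
`sup_v d(v) = inf_x p(x)` holds, if and only if (b) `(X̄,V̄)` is a saddle point of `l`.
The same equivalence holds for full solutions and full saddle points. -/
theorem solutions_and_strong_duality_iff_saddle_point
    [CompleteLattice L] [Nonempty X] [Nonempty V]
    (l : X → V → L) (Xb : Set X) (Vb : Set V) (hXb : Xb.Nonempty) (hVb : Vb.Nonempty) :
    ((((⨅ x ∈ Xb, pFun l x) = ⨅ x : X, pFun l x) ∧
        pFun l '' Xb ⊆ MinSet (Set.range (pFun l)) ∧
        ((⨆ v ∈ Vb, dFun l v) = ⨆ v : V, dFun l v) ∧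
        dFun l '' Vb ⊆ MaxSet (Set.range (dFun l)) ∧
        (⨆ v : V, dFun l v) = (⨅ x : X, pFun l x))
      ↔ IsSaddle l Xb Vb) ∧
    ((((⨅ x ∈ Xb, pFun l x) = ⨅ x : X, pFun l x) ∧
        pFun l '' Xb = MinSet (Set.range (pFun l)) ∧
        ((⨆ v ∈ Vb, dFun l v) = ⨆ v : V, dFun l v) ∧
        dFun l '' Vb = MaxSet (Set.range (dFun l)) ∧
        (⨆ v : V, dFun l v) = (⨅ x : X, pFun l x))
      ↔ IsFullSaddle l Xb Vb) := by
  have key : SaddleIneq l Xb Vb ↔ (⨅ x ∈ Xb, pFun l x) = (⨆ v ∈ Vb, dFun l v) :=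
    aux_saddleIneq_iff l Xb Vb
  have hsup : (⨆ v ∈ Vb, dFun l v) ≤ ⨆ v : V, dFun l v :=
    iSup₂_le fun v _ => le_iSup (dFun l) v
  have hinf : (⨅ x : X, pFun l x) ≤ ⨅ x ∈ Xb, pFun l x :=
    le_iInf₂ fun x _ => iInf_le (pFun l) x
  have hw := aux_weak_duality l
  constructor
  · constructor
    · rintro ⟨h1, h2, h3, h4, h5⟩
      exact ⟨⟨hXb.image _, h2, hVb.image _, h4⟩,
        key.mpr (by rw [h1, h3, h5])⟩
    · rintro ⟨⟨-, h2, -, h4⟩, hsi⟩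
      have heq := key.mp hsi
      have c : (⨅ x ∈ Xb, pFun l x) ≤ ⨆ v ∈ Vb, dFun l v := le_of_eq heq
      have e3 : (⨆ v ∈ Vb, dFun l v) = ⨆ v : V, dFun l v :=
        le_antisymm hsup ((hw.trans hinf).trans c)
      have e1 : (⨅ x ∈ Xb, pFun l x) = ⨅ x : X, pFun l x :=
        le_antisymm (c.trans (hsup.trans hw)) hinf
      exact ⟨e1, h2, e3, h4, le_antisymm hw (by rw [← e1, ← e3]; exact heq.le)⟩
  · constructor
    · rintro ⟨h1, h2, h3, h4, h5⟩
      exact ⟨⟨hXb.image _, h2, hVb.image _, h4⟩,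
        key.mpr (by rw [h1, h3, h5])⟩
    · rintro ⟨⟨-, h2, -, h4⟩, hsi⟩
      have heq := key.mp hsi
      have c : (⨅ x ∈ Xb, pFun l x) ≤ ⨆ v ∈ Vb, dFun l v := le_of_eq heq
      have e3 : (⨆ v ∈ Vb, dFun l v) = ⨆ v : V, dFun l v :=
        le_antisymm hsup ((hw.trans hinf).trans c)
      have e1 : (⨅ x ∈ Xb, pFun l x) = ⨅ x : X, pFun l x :=
        le_antisymm (c.trans (hsup.trans hw)) hinf
      exact ⟨e1, h2, e3, h4, le_antisymm hw (by rw [← e1, ← e3]; exact heq.le)⟩
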